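/- Let I ⊆ ℝ be an open interval and let u : ℝ → ℝ be three times differentiable on I with 2·u′(x)·u‴(x) − 3·u″(x)² − 2·u(x)·u′(x)⁴ = 0 for all x ∈ I. Then for every t ∈ ℝ, the function v(x) := u(x/(1+t·x)) satisfies 2·v′(x)·v‴(x) − 3·v″(x)² − 2·v(x)·v′(x)⁴ = 0 at every x with 1 + t·x ≠ 0 and x/(1+t·x) ∈ I. (The vector field v₂ = x²∂ₓ of (6.2) generates a symmetry group of equation (6.1) of the paper.) -/

import Mathlib

/-- The vector field `v₂ = x² ∂ₓ` generates a symmetry group of equation (6.1). -/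
theorem projective_symmetry_exampleI (a b t : ℝ) (u : ℝ → ℝ)
    (hu1 : ∀ x ∈ Set.Ioo a b, DifferentiableAt ℝ u x)
    (hu2 : ∀ x ∈ Set.Ioo a b, DifferentiableAt ℝ (deriv u) x)
    (hu3 : ∀ x ∈ Set.Ioo a b, DifferentiableAt ℝ (deriv (deriv u)) x)
    (hode : ∀ x ∈ Set.Ioo a b,
      2 * deriv u x * deriv (deriv (deriv u)) x - 3 * (deriv (deriv u) x) ^ 2
        - 2 * u x * (deriv u x) ^ 4 = 0) :
    ∀ x : ℝ, 1 + t * x ≠ 0 → x / (1 + t * x) ∈ Set.Ioo a b →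
      2 * deriv (fun y => u (y / (1 + t * y))) x *
          deriv (deriv (deriv (fun y => u (y / (1 + t * y))))) x
        - 3 * (deriv (deriv (fun y => u (y / (1 + t * y)))) x) ^ 2
        - 2 * (fun y => u (y / (1 + t * y))) x *
            (deriv (fun y => u (y / (1 + t * y))) x) ^ 4 = 0 := by
  intro x hx hmem
  -- notation
  set W : ℝ → ℝ := fun y => (1 + t * y)⁻¹ with hWdef
  set g : ℝ → ℝ := fun y => y / (1 + t * y) with hgdef
  set D1 : ℝ → ℝ := fun y => deriv u (g y) * (W y) ^ 2 with hD1def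
  set D2 : ℝ → ℝ := fun y =>
    deriv (deriv u) (g y) * (W y) ^ 4 - 2 * t * deriv u (g y) * (W y) ^ 3 with hD2def
  set D3 : ℝ → ℝ := fun y =>
    deriv (deriv (deriv u)) (g y) * (W y) ^ 6
      - 6 * t * deriv (deriv u) (g y) * (W y) ^ 5
      + 6 * t ^ 2 * deriv u (g y) * (W y) ^ 4 with hD3def
  set S : Set ℝ := {y | 1 + t * y ≠ 0 ∧ g y ∈ Set.Ioo a b} with hSdef
  have hxS : x ∈ S := ⟨hx, hmem⟩
  -- basic derivative facts
  have hc : ∀ y : ℝ, HasDerivAt (fun z => 1 + t * z) t y := by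
    intro y
    simpa using ((hasDerivAt_id y).const_mul t).const_add 1
  have hWd : ∀ y : ℝ, 1 + t * y ≠ 0 → HasDerivAt W (-t * (W y) ^ 2) y := by
    intro y hy
    have := (hc y).fun_inv hy
    refine this.congr_deriv ?_
    simp only [hWdef]
    field_simp [hWdef]
  have hgd : ∀ y : ℝ, 1 + t * y ≠ 0 → HasDerivAt g ((W y) ^ 2) y := by
    intro y hy
    have := (hasDerivAt_id y).fun_div (hc y) hy
    refine this.congr_deriv ?_
    simp only [hWdef, id_eq]
    field_simp [hWdef]
    ring
  -- S is a neighborhood of each of its points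
  have hSnhds : ∀ y ∈ S, S ∈ nhds y := by
    intro y hy
    have h1 : {z : ℝ | 1 + t * z ≠ 0} ∈ nhds y := by
      have : ContinuousAt (fun z => 1 + t * z) y := (hc y).continuousAt
      exact this.preimage_mem_nhds (compl_singleton_mem_nhds hy.1)
    have hgc : ContinuousAt g y := (hgd y hy.1).continuousAt
    have h2 : g ⁻¹' Set.Ioo a b ∈ nhds y :=
      hgc.preimage_mem_nhds (isOpen_Ioo.mem_nhds hy.2)
    have : {z : ℝ | 1 + t * z ≠ 0} ∩ g ⁻¹' Set.Ioo a b ∈ nhds y :=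
      Filter.inter_mem h1 h2
    exact Filter.mem_of_superset this (fun z hz => ⟨hz.1, hz.2⟩)
  -- first derivative
  have hv1 : ∀ y ∈ S, HasDerivAt (fun z => u (g z)) (D1 y) y := by
    intro y hy
    exact ((hu1 (g y) hy.2).hasDerivAt).comp y (hgd y hy.1)
  have hderiv1 : ∀ y ∈ S, deriv (fun z => u (z / (1 + t * z))) y = D1 y := by
    intro y hy
    exact (hv1 y hy).deriv
  -- second derivative
  have hD1d : ∀ y ∈ S, HasDerivAt D1 (D2 y) y := by
    intro y hy
    have h1 : HasDerivAt (fun z => deriv u (g z))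
        (deriv (deriv u) (g y) * (W y) ^ 2) y :=
      ((hu2 (g y) hy.2).hasDerivAt).comp y (hgd y hy.1)
    have h2 : HasDerivAt (fun z => (W z) ^ 2) (2 * (W y) ^ 1 * (-t * (W y) ^ 2)) y :=
      (hWd y hy.1).pow 2
    have := h1.fun_mul h2
    refine this.congr_deriv ?_
    simp [hD2def]
    ring
  have hderiv2 : ∀ y ∈ S, deriv (deriv (fun z => u (z / (1 + t * z)))) y = D2 y := by
    intro y hy
    have heq : deriv (fun z => u (z / (1 + t * z))) =ᶠ[nhds y] D1 :=
      Filter.eventuallyEq_of_mem (hSnhds y hy) hderiv1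
    rw [heq.deriv_eq]
    exact (hD1d y hy).deriv
  -- third derivative
  have hD2d : ∀ y ∈ S, HasDerivAt D2 (D3 y) y := by
    intro y hy
    have h1 : HasDerivAt (fun z => deriv (deriv u) (g z))
        (deriv (deriv (deriv u)) (g y) * (W y) ^ 2) y :=
      ((hu3 (g y) hy.2).hasDerivAt).comp y (hgd y hy.1)
    have h1' : HasDerivAt (fun z => deriv u (g z))
        (deriv (deriv u) (g y) * (W y) ^ 2) y :=
      ((hu2 (g y) hy.2).hasDerivAt).comp y (hgd y hy.1)
    have h2 : HasDerivAt (fun z => (W z) ^ 4) (4 * (W y) ^ 3 * (-t * (W y) ^ 2)) y :=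
      (hWd y hy.1).pow 4
    have h3 : HasDerivAt (fun z => (W z) ^ 3) (3 * (W y) ^ 2 * (-t * (W y) ^ 2)) y :=
      (hWd y hy.1).pow 3
    have hA := h1.fun_mul h2
    have hB := ((h1'.const_mul (2 * t)).fun_mul h3)
    have := hA.fun_sub hB
    refine this.congr_deriv ?_
    simp [hD3def]
    ring
  have hderiv3 : deriv (deriv (deriv (fun z => u (z / (1 + t * z))))) x = D3 x := by
    have heq : deriv (deriv (fun z => u (z / (1 + t * z)))) =ᶠ[nhds x] D2 :=
      Filter.eventuallyEq_of_mem (hSnhds x hxS) hderiv2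
    rw [heq.deriv_eq]
    exact (hD2d x hxS).deriv
  -- conclude
  rw [hderiv1 x hxS, hderiv2 x hxS, hderiv3]
  simp only [hD1def, hD2def, hD3def]
  have hodex := hode (g x) hmem
  simp only [hgdef]
  linear_combination (W x) ^ 8 * hodex
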